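/- Let n ≥ 1, y ∈ ℝⁿ, τ ∈ ℝⁿ with τ_i > 0, and let u*(λ) be the unique minimizer of F(·, y, τ, λ). The number of segments K(λ) of u*(λ) is a nonincreasing function of λ on [0, ∞). -/

import Mathlib

/-- The weighted total-variation functional
`F(u, y, τ, λ) = Σ_{i=1}^n τ_i (y_i − u_i)² + λ Σ_{i=1}^{n−1} |u_{i+1} − u_i|`
for a signal with `n + 1` samples (indexed by `Fin (n+1)`, so that the number
of samples is an arbitrary integer `≥ 1`). -/
noncomputable def tvF (n : ℕ) (y τ : Fin (n + 1) → ℝ) (lam : ℝ)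
    (u : Fin (n + 1) → ℝ) : ℝ :=
  (∑ i : Fin (n + 1), τ i * (y i - u i) ^ 2) +
    lam * ∑ i : Fin n, |u i.succ - u i.castSucc|


open Finset

noncomputable def Fnat (n : ℕ) (y τ : ℕ → ℝ) (c : ℝ) (u : ℕ → ℝ) : ℝ :=
  (∑ i ∈ range (n+1), τ i * (y i - u i) ^ 2) + c * ∑ k ∈ range n, |u (k+1) - u k|

lemma abel_sum (g x : ℕ → ℝ) (n : ℕ) :
    ∑ i ∈ range (n+1), g i * x i =
      (∑ j ∈ range (n+1), g j) * x n
        - ∑ k ∈ range n, (∑ j ∈ range (k+1), g j) * (x (k+1) - x k) := by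
  induction n with
  | zero => simp
  | succ n ih =>
    rw [sum_range_succ (fun i => g i * x i), ih, sum_range_succ (fun k => (∑ j ∈ range (k+1), g j) * (x (k+1) - x k)), sum_range_succ g (n+1), sum_range_succ g n]
    ring

lemma min_of_kkt (n : ℕ) (y τ : ℕ → ℝ) (c : ℝ) (u : ℕ → ℝ)
    (hτ : ∀ i, 0 ≤ τ i)
    (htot : ∑ j ∈ range (n+1), 2 * τ j * (u j - y j) = 0)
    (hk : ∀ k, k < n → |∑ j ∈ range (k+1), 2 * τ j * (u j - y j)| ≤ c ∧
      (u k < u (k+1) → ∑ j ∈ range (k+1), 2 * τ j * (u j - y j) = c) ∧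
      (u (k+1) < u k → ∑ j ∈ range (k+1), 2 * τ j * (u j - y j) = -c))
    (v : ℕ → ℝ) : Fnat n y τ c u ≤ Fnat n y τ c v := by
  set g : ℕ → ℝ := fun i => 2 * τ i * (u i - y i) with hg
  set x : ℕ → ℝ := fun i => v i - u i with hx
  have hquad : ∑ i ∈ range (n+1), τ i * (y i - v i) ^ 2
      = ∑ i ∈ range (n+1), (τ i * (y i - u i) ^ 2 + (g i * x i + τ i * x i ^ 2)) := by
    apply Finset.sum_congr rfl
    intro i _
    simp only [hg, hx]
    ring
  have habel : ∑ i ∈ range (n+1), g i * x i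
      = - ∑ k ∈ range n, (∑ j ∈ range (k+1), g j) * (x (k+1) - x k) := by
    rw [abel_sum, htot]
    ring
  have hterm : ∀ k ∈ range n,
      (∑ j ∈ range (k+1), g j) * (x (k+1) - x k)
        ≤ c * |v (k+1) - v k| - c * |u (k+1) - u k| := by
    intro k hkr
    rw [mem_range] at hkr
    obtain ⟨hZle, hup, hdn⟩ := hk k hkr
    set Z : ℝ := ∑ j ∈ range (k+1), g j with hZ
    have hxdiff : x (k+1) - x k = (v (k+1) - v k) - (u (k+1) - u k) := by
      simp only [hx]; ring
    have h1 : Z * (u (k+1) - u k) = c * |u (k+1) - u k| := by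
      rcases lt_trichotomy (u k) (u (k+1)) with h | h | h
      · rw [hup h, abs_of_pos (by linarith)]
      · rw [h]; simp
      · rw [hdn h, abs_of_neg (by linarith)]; ring
    have h2 : Z * (v (k+1) - v k) ≤ c * |v (k+1) - v k| := by
      calc Z * (v (k+1) - v k) ≤ |Z * (v (k+1) - v k)| := le_abs_self _
        _ = |Z| * |v (k+1) - v k| := abs_mul _ _
        _ ≤ c * |v (k+1) - v k| :=
            mul_le_mul_of_nonneg_right hZle (abs_nonneg _)
    rw [hxdiff, mul_sub]
    linarith
  have hsum : ∑ i ∈ range (n+1), g i * x i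
      ≥ c * ∑ k ∈ range n, |u (k+1) - u k| - c * ∑ k ∈ range n, |v (k+1) - v k| := by
    rw [habel, ge_iff_le, mul_sum, mul_sum, ← Finset.sum_sub_distrib, le_neg]
    rw [← Finset.sum_neg_distrib]
    apply Finset.sum_le_sum
    intro k hkr
    have := hterm k hkr
    linarith
  have hxsq : 0 ≤ ∑ i ∈ range (n+1), τ i * x i ^ 2 :=
    Finset.sum_nonneg fun i _ => mul_nonneg (hτ i) (sq_nonneg _)
  simp only [Fnat]
  rw [hquad, Finset.sum_add_distrib, Finset.sum_add_distrib]
  linarith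

lemma sum_ite_le (f : ℕ → ℝ) (n k : ℕ) (hk : k < n+1) :
    ∑ i ∈ range (n+1), (if i ≤ k then f i else 0) = ∑ i ∈ range (k+1), f i := by
  rw [← sum_filter]
  congr 1
  ext a
  simp only [mem_filter, mem_range]
  omega

lemma kkt_of_min (n : ℕ) (y τ u : ℕ → ℝ) (c : ℝ)
    (hτ : ∀ i, i < n+1 → 0 < τ i) (hc : 0 ≤ c)
    (hmin : ∀ v, Fnat n y τ c u ≤ Fnat n y τ c v) :
    (∑ j ∈ range (n+1), 2 * τ j * (u j - y j) = 0) ∧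
    ∀ k, k < n → |∑ j ∈ range (k+1), 2 * τ j * (u j - y j)| ≤ c ∧
      (u k < u (k+1) → ∑ j ∈ range (k+1), 2 * τ j * (u j - y j) = c) ∧
      (u (k+1) < u k → ∑ j ∈ range (k+1), 2 * τ j * (u j - y j) = -c) := by
  constructor
  · -- total sum is zero
    set S : ℝ := ∑ j ∈ range (n+1), 2 * τ j * (u j - y j) with hS
    set T : ℝ := ∑ j ∈ range (n+1), τ j with hT
    have hT0 : 0 < T := by
      apply Finset.sum_pos (fun i hi => hτ i (mem_range.mp hi))
      exact ⟨0, by simp⟩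
    have hpert : ∀ t : ℝ, 0 ≤ t * S + t^2 * T := by
      intro t
      have h := hmin (fun i => u i + t)
      simp only [Fnat] at h
      have hq : ∑ i ∈ range (n+1), τ i * (y i - (u i + t))^2
          = ∑ i ∈ range (n+1), (τ i * (y i - u i)^2 + (t * (2 * τ i * (u i - y i)) + t^2 * τ i)) := by
        apply sum_congr rfl
        intro i _
        ring
      have htv : ∑ k ∈ range n, |u (k+1) + t - (u k + t)| = ∑ k ∈ range n, |u (k+1) - u k| := by
        apply sum_congr rfl
        intro k _
        congr 1
        ring
      rw [hq, htv, sum_add_distrib, sum_add_distrib, ← mul_sum, ← mul_sum] at h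
      rw [hS, hT]
      linarith
    have h1 := hpert (-(S / (2 * T)))
    have h2 : (-(S / (2 * T))) * S + (-(S / (2 * T)))^2 * T = -(S^2 / (4 * T)) := by
      field_simp
      ring
    rw [h2] at h1
    have hTne : T ≠ 0 := ne_of_gt hT0
    have h3 : S^2 / (4*T) = 0 :=
      le_antisymm (by linarith) (div_nonneg (sq_nonneg S) (by linarith))
    field_simp at h3
    exact pow_eq_zero_iff two_ne_zero |>.mp (by linarith)
  · intro k hkn
    set Z : ℝ := ∑ j ∈ range (k+1), 2 * τ j * (u j - y j) with hZ
    set T : ℝ := ∑ j ∈ range (k+1), τ j with hT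
    set D : ℝ := u (k+1) - u k with hD
    have hT0 : 0 < T := by
      apply Finset.sum_pos (fun i hi => hτ i (by rw [mem_range] at hi; omega))
      exact ⟨0, by simp⟩
    have hpert : ∀ t : ℝ, 0 ≤ t * Z + t^2 * T + c * (|D - t| - |D|) := by
      intro t
      have h := hmin (fun i => if i ≤ k then u i + t else u i)
      simp only [Fnat] at h
      have hq : ∑ i ∈ range (n+1), τ i * (y i - (if i ≤ k then u i + t else u i))^2
          = ∑ i ∈ range (n+1), (τ i * (y i - u i)^2
              + (if i ≤ k then t * (2 * τ i * (u i - y i)) + t^2 * τ i else 0)) := by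
        apply sum_congr rfl
        intro i _
        split_ifs with h'
        · ring
        · ring
      have htv : ∀ m ∈ range n,
          |(if m+1 ≤ k then u (m+1) + t else u (m+1)) - (if m ≤ k then u m + t else u m)|
            = |u (m+1) - u m| + (if m = k then |D - t| - |D| else 0) := by
        intro m _
        by_cases hm : m = k
        · subst hm
          rw [if_neg (by omega), if_pos (le_refl m), if_pos rfl]
          have harg : u (m+1) - (u m + t) = D - t := by rw [hD]; ring
          rw [harg]
          ring
        · rw [if_neg hm, add_zero]
          by_cases h2 : m ≤ k
          · rw [if_pos (by omega : m+1 ≤ k), if_pos h2]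
            congr 1
            ring
          · rw [if_neg (by omega), if_neg h2]
      rw [hq, sum_add_distrib, sum_congr rfl htv, sum_add_distrib,
        sum_ite_le _ n k (by omega), sum_ite_eq' (range n) k (fun _ => |D - t| - |D|),
        if_pos (mem_range.mpr hkn), sum_add_distrib, ← mul_sum, ← mul_sum,
        mul_add] at h
      rw [hZ, hT]
      linarith
    -- Z ≤ c
    have hup_le : Z ≤ c := by
      apply le_of_forall_pos_le_add
      intro ε hε
      have hs0 : 0 < ε / T := div_pos hε hT0
      have h := hpert (-(ε / T))
      have habs : |D - -(ε / T)| - |D| ≤ ε / T := by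
        have := abs_add_le D (ε / T)
        have h2 : |D + ε / T| = |D - -(ε / T)| := by congr 1; ring
        rw [abs_of_pos hs0] at this
        linarith
      have hcabs : c * (|D - -(ε / T)| - |D|) ≤ c * (ε / T) :=
        mul_le_mul_of_nonneg_left habs hc
      have hTε : (ε / T) * T = ε := div_mul_cancel₀ ε (ne_of_gt hT0)
      nlinarith
    -- -c ≤ Z
    have hdn_le : -c ≤ Z := by
      rw [neg_le]
      apply le_of_forall_pos_le_add
      intro ε hε
      have hs0 : 0 < ε / T := div_pos hε hT0
      have h := hpert (ε / T)
      have habs : |D - ε / T| - |D| ≤ ε / T := by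
        have := abs_sub_abs_le_abs_sub (D - ε / T) D
        have h2 : |D - ε / T - D| = ε / T := by
          rw [show D - ε / T - D = -(ε / T) by ring, abs_neg, abs_of_pos hs0]
        linarith
      have hcabs : c * (|D - ε / T| - |D|) ≤ c * (ε / T) :=
        mul_le_mul_of_nonneg_left habs hc
      have hTε : (ε / T) * T = ε := div_mul_cancel₀ ε (ne_of_gt hT0)
      nlinarith
    refine ⟨abs_le.mpr ⟨hdn_le, hup_le⟩, ?_, ?_⟩
    · -- jump up : Z = c
      intro hjump
      have hD0 : 0 < D := by rw [hD]; linarith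
      have hge : c ≤ Z := by
        apply le_of_forall_pos_le_add
        intro ε hε
        set t : ℝ := min (D/2) (ε/T) with ht
        have ht0 : 0 < t := lt_min (by linarith) (div_pos hε hT0)
        have htD : t < D := lt_of_le_of_lt (min_le_left _ _) (by linarith)
        have h := hpert t
        rw [abs_of_pos hD0, abs_of_pos (by linarith : (0:ℝ) < D - t)] at h
        have hZt : c ≤ Z + t * T := by nlinarith
        have : t * T ≤ ε := by
          have : t ≤ ε / T := min_le_right _ _
          calc t * T ≤ (ε / T) * T := mul_le_mul_of_nonneg_right this hT0.le
            _ = ε := div_mul_cancel₀ ε (ne_of_gt hT0)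
        linarith
      linarith
    · -- jump down : Z = -c
      intro hjump
      have hD0 : D < 0 := by rw [hD]; linarith
      have hge : Z ≤ -c := by
        have : ∀ ε, 0 < ε → Z ≤ -c + ε := by
          intro ε hε
          set t : ℝ := min (-D/2) (ε/T) with ht
          have ht0 : 0 < t := lt_min (by linarith) (div_pos hε hT0)
          have htD : t < -D := lt_of_le_of_lt (min_le_left _ _) (by linarith)
          have h := hpert (-t)
          rw [abs_of_neg hD0, abs_of_neg (by linarith : D - -t < 0)] at h
          have hZt : Z ≤ -c + t * T := by nlinarith
          have : t * T ≤ ε := by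
            have : t ≤ ε / T := min_le_right _ _
            calc t * T ≤ (ε / T) * T := mul_le_mul_of_nonneg_right this hT0.le
              _ = ε := div_mul_cancel₀ ε (ne_of_gt hT0)
          linarith
        exact le_of_forall_pos_le_add this
      linarith

lemma sandwich (n : ℕ) (d τ w : ℕ → ℝ) (μ : ℝ)
    (hτ : ∀ i, i < n+1 → 0 < τ i) (hμ : 0 ≤ μ)
    (htot : ∑ j ∈ range (n+1), 2 * τ j * (w j - d j) = 0)
    (hk : ∀ k, k < n → |∑ j ∈ range (k+1), 2 * τ j * (w j - d j)| ≤ μ)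
    (k : ℕ) (hkn : k < n) :
    (∑ j ∈ range (k+1), 2 * τ j * (w j - d j) = μ → d k ≤ w k ∧ w (k+1) ≤ d (k+1)) ∧
    (∑ j ∈ range (k+1), 2 * τ j * (w j - d j) = -μ → w k ≤ d k ∧ d (k+1) ≤ w (k+1)) := by
  have hWk : -μ ≤ ∑ j ∈ range k, 2 * τ j * (w j - d j)
      ∧ ∑ j ∈ range k, 2 * τ j * (w j - d j) ≤ μ := by
    rcases Nat.eq_zero_or_pos k with h0 | hpos
    · subst h0
      simp only [range_zero, sum_empty]
      exact ⟨by linarith, hμ⟩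
    · obtain ⟨m, rfl⟩ := Nat.exists_eq_succ_of_ne_zero hpos.ne'
      exact abs_le.mp (hk m (by omega))
  have hWk2 : -μ ≤ ∑ j ∈ range (k+2), 2 * τ j * (w j - d j)
      ∧ ∑ j ∈ range (k+2), 2 * τ j * (w j - d j) ≤ μ := by
    rcases Nat.lt_or_ge (k+1) n with h | h
    · exact abs_le.mp (hk (k+1) h)
    · have h2 : k + 2 = n + 1 := by omega
      rw [h2, htot]
      exact ⟨by linarith, hμ⟩
  have hstep1 : ∑ j ∈ range (k+1), 2 * τ j * (w j - d j)
      = ∑ j ∈ range k, 2 * τ j * (w j - d j) + 2 * τ k * (w k - d k) :=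
    sum_range_succ _ k
  have hstep2 : ∑ j ∈ range (k+2), 2 * τ j * (w j - d j)
      = ∑ j ∈ range (k+1), 2 * τ j * (w j - d j) + 2 * τ (k+1) * (w (k+1) - d (k+1)) :=
    sum_range_succ _ (k+1)
  have hτk : 0 < τ k := hτ k (by omega)
  have hτk1 : 0 < τ (k+1) := hτ (k+1) (by omega)
  constructor
  · intro hup
    constructor
    · nlinarith [hWk.2]
    · nlinarith [hWk2.2]
  · intro hdn
    constructor
    · nlinarith [hWk.1]
    · nlinarith [hWk2.1]

lemma tvF_continuous (n : ℕ) (y τ : Fin (n+1) → ℝ) (c : ℝ) :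
    Continuous (tvF n y τ c) := by
  unfold tvF
  apply Continuous.add
  · apply continuous_finset_sum
    intro i _
    exact continuous_const.mul ((continuous_const.sub (continuous_apply i)).pow 2)
  · apply Continuous.mul continuous_const
    apply continuous_finset_sum
    intro i _
    exact ((continuous_apply i.succ).sub (continuous_apply i.castSucc)).abs

lemma tvF_nonneg_parts (n : ℕ) (y τ : Fin (n+1) → ℝ) (c : ℝ) (hτ : ∀ i, 0 < τ i)
    (hc : 0 ≤ c) (v : Fin (n+1) → ℝ) (i : Fin (n+1)) :
    τ i * (y i - v i) ^ 2 ≤ tvF n y τ c v := by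
  unfold tvF
  have h1 : τ i * (y i - v i) ^ 2 ≤ ∑ j : Fin (n+1), τ j * (y j - v j) ^ 2 :=
    Finset.single_le_sum (f := fun j => τ j * (y j - v j) ^ 2)
      (fun j _ => mul_nonneg (hτ j).le (sq_nonneg _)) (mem_univ i)
  have h2 : 0 ≤ c * ∑ i : Fin n, |v i.succ - v i.castSucc| :=
    mul_nonneg hc (Finset.sum_nonneg fun _ _ => abs_nonneg _)
  linarith

lemma tvF_exists_min (n : ℕ) (y τ : Fin (n+1) → ℝ) (hτ : ∀ i, 0 < τ i) (c : ℝ)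
    (hc : 0 ≤ c) : ∃ u, ∀ v, tvF n y τ c u ≤ tvF n y τ c v := by
  obtain ⟨i₀, -, hm⟩ := Finset.exists_min_image (univ : Finset (Fin (n+1))) τ ⟨0, mem_univ 0⟩
  obtain ⟨j₀, -, hM⟩ := Finset.exists_max_image (univ : Finset (Fin (n+1)))
    (fun i => |y i|) ⟨0, mem_univ 0⟩
  set m : ℝ := τ i₀ with hmdef
  have hm0 : 0 < m := hτ i₀
  set B : ℝ := ∑ i : Fin (n+1), τ i * y i ^ 2 with hBdef
  have hB0 : 0 ≤ B := Finset.sum_nonneg fun i _ => mul_nonneg (hτ i).le (sq_nonneg _)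
  have hf0 : tvF n y τ c 0 = B := by
    unfold tvF
    simp
    exact hBdef.symm
  set R : ℝ := |y j₀| + Real.sqrt (B / m) + 1 with hRdef
  have hsq : Real.sqrt (B / m) ^ 2 = B / m := Real.sq_sqrt (div_nonneg hB0 hm0.le)
  have hsqnn : 0 ≤ Real.sqrt (B / m) := Real.sqrt_nonneg _
  have hR0 : 0 ≤ R := by positivity
  have hK : IsCompact (Metric.closedBall (0 : Fin (n+1) → ℝ) R) :=
    isCompact_closedBall _ _
  obtain ⟨w, hwK, hw⟩ := hK.exists_isMinOn ⟨0, Metric.mem_closedBall_self hR0⟩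
    ((tvF_continuous n y τ c).continuousOn)
  refine ⟨w, fun v => ?_⟩
  by_cases hv : v ∈ Metric.closedBall (0 : Fin (n+1) → ℝ) R
  · exact hw hv
  · have hw0 : tvF n y τ c w ≤ B := by
      rw [← hf0]
      exact hw (Metric.mem_closedBall_self hR0)
    -- some coordinate of v is large
    have : ¬ (∀ i, |v i| ≤ R) := by
      intro hall
      apply hv
      rw [Metric.mem_closedBall, dist_zero_right]
      exact pi_norm_le_iff_of_nonneg hR0 |>.mpr fun i => by
        rw [Real.norm_eq_abs]; exact hall i
    push_neg at this
    obtain ⟨i, hi⟩ := this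
    have h1 : τ i * (y i - v i) ^ 2 ≤ tvF n y τ c v :=
      tvF_nonneg_parts n y τ c hτ hc v i
    have h2 : |y i| ≤ |y j₀| := hM i (mem_univ i)
    have h3 : Real.sqrt (B / m) + 1 ≤ |v i| - |y i| := by
      have : R < |v i| := hi
      rw [hRdef] at this
      linarith
    have h4 : (Real.sqrt (B / m) + 1) ^ 2 ≤ (y i - v i) ^ 2 := by
      have habs : Real.sqrt (B / m) + 1 ≤ |y i - v i| := by
        have := abs_sub_abs_le_abs_sub (v i) (y i)
        have h5 : |v i - y i| = |y i - v i| := abs_sub_comm _ _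
        linarith
      calc (Real.sqrt (B / m) + 1) ^ 2 ≤ |y i - v i| ^ 2 := by
            apply pow_le_pow_left₀ (by positivity) habs _
        _ = (y i - v i) ^ 2 := sq_abs _
    have h6 : B < τ i * (y i - v i) ^ 2 := by
      have hmi : m ≤ τ i := hm i (mem_univ i)
      have h7 : m * (Real.sqrt (B / m) + 1) ^ 2 ≤ τ i * (y i - v i) ^ 2 := by
        apply mul_le_mul hmi h4 (by positivity) (hτ i).le
      have h8 : m * (B / m) = B := mul_div_cancel₀ B hm0.ne'
      nlinarith
    linarith

lemma tvF_min_unique (n : ℕ) (y τ : Fin (n+1) → ℝ) (hτ : ∀ i, 0 < τ i) (c : ℝ)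
    (hc : 0 ≤ c) (u u' : Fin (n+1) → ℝ)
    (hu : ∀ v, tvF n y τ c u ≤ tvF n y τ c v)
    (hu' : ∀ v, tvF n y τ c u' ≤ tvF n y τ c v) : u = u' := by
  have heq : tvF n y τ c u = tvF n y τ c u' := le_antisymm (hu u') (hu' u)
  set mid : Fin (n+1) → ℝ := fun i => (u i + u' i) / 2 with hmid
  have hquad : ∑ i : Fin (n+1), τ i * (y i - mid i) ^ 2
      = ∑ i : Fin (n+1), (τ i * (y i - u i) ^ 2 / 2 + τ i * (y i - u' i) ^ 2 / 2
          - τ i * (u i - u' i) ^ 2 / 4) := by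
    apply Finset.sum_congr rfl
    intro i _
    simp only [hmid]
    ring
  have htv : ∑ i : Fin n, |mid i.succ - mid i.castSucc|
      ≤ ∑ i : Fin n, (|u i.succ - u i.castSucc| / 2 + |u' i.succ - u' i.castSucc| / 2) := by
    apply Finset.sum_le_sum
    intro i _
    have harg : mid i.succ - mid i.castSucc
        = ((u i.succ - u i.castSucc) + (u' i.succ - u' i.castSucc)) / 2 := by
      simp only [hmid]; ring
    rw [harg, abs_div, abs_two]
    have := abs_add_le (u i.succ - u i.castSucc) (u' i.succ - u' i.castSucc)
    linarith
  have hmin := hu mid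
  have hS : 0 ≤ ∑ i : Fin (n+1), τ i * (u i - u' i) ^ 2 :=
    Finset.sum_nonneg fun i _ => mul_nonneg (hτ i).le (sq_nonneg _)
  have hkey : ∑ i : Fin (n+1), τ i * (u i - u' i) ^ 2 ≤ 0 := by
    have e1 : tvF n y τ c mid ≤ tvF n y τ c u
        - (∑ i : Fin (n+1), τ i * (u i - u' i) ^ 2) / 4 := by
      unfold tvF
      rw [hquad, Finset.sum_sub_distrib, Finset.sum_add_distrib]
      have h2 : c * ∑ i : Fin n, |mid i.succ - mid i.castSucc|
          ≤ c * ∑ i : Fin n, (|u i.succ - u i.castSucc| / 2 + |u' i.succ - u' i.castSucc| / 2) :=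
        mul_le_mul_of_nonneg_left htv hc
      rw [Finset.sum_add_distrib] at h2
      -- use heq to exchange u' terms for u terms
      have e2 : tvF n y τ c u' = tvF n y τ c u := heq.symm
      unfold tvF at e2
      have h3 : ∀ (f : Fin (n+1) → ℝ), ∑ i : Fin (n+1), f i / 2 = (∑ i : Fin (n+1), f i) / 2 := by
        intro f; rw [← Finset.sum_div]
      have h4 : ∀ (f : Fin n → ℝ), ∑ i : Fin n, f i / 2 = (∑ i : Fin n, f i) / 2 := by
        intro f; rw [← Finset.sum_div]
      rw [h3 (fun i => τ i * (y i - u i) ^ 2), h3 (fun i => τ i * (y i - u' i) ^ 2)] at *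
      rw [h4 (fun i => |u i.succ - u i.castSucc|), h4 (fun i => |u' i.succ - u' i.castSucc|)] at h2
      have h5 : (∑ i : Fin (n+1), τ i * (u i - u' i) ^ 2 / 4)
          = (∑ i : Fin (n+1), τ i * (u i - u' i) ^ 2) / 4 := by
        rw [← Finset.sum_div]
      rw [h5]
      nlinarith [h2, e2]
    linarith [hu mid, e1]
  have hzero : ∑ i : Fin (n+1), τ i * (u i - u' i) ^ 2 = 0 := le_antisymm hkey hS
  funext i
  have := (Finset.sum_eq_zero_iff_of_nonneg
    (fun j (_ : j ∈ univ) => mul_nonneg (hτ j).le (sq_nonneg (u j - u' j)))).mp hzero i (mem_univ i)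
  have h6 : (u i - u' i) ^ 2 = 0 := by
    rcases mul_eq_zero.mp this with h | h
    · exact absurd h (hτ i).ne'
    · exact h
  have := pow_eq_zero_iff (n := 2) (by norm_num) |>.mp h6
  linarith

noncomputable def extF (n : ℕ) (u : Fin (n+1) → ℝ) : ℕ → ℝ :=
  fun j => if h : j < n+1 then u ⟨j, h⟩ else 0

lemma extF_coe (n : ℕ) (u : Fin (n+1) → ℝ) (j : ℕ) (h : j < n+1) :
    extF n u j = u ⟨j, h⟩ := dif_pos h

lemma extF_app (n : ℕ) (u : Fin (n+1) → ℝ) (i : Fin (n+1)) :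
    extF n u ↑i = u i := by
  rw [extF_coe n u i i.isLt]

lemma tvF_eq_Fnat (n : ℕ) (y τ : Fin (n+1) → ℝ) (c : ℝ) (u : Fin (n+1) → ℝ) :
    tvF n y τ c u = Fnat n (extF n y) (extF n τ) c (extF n u) := by
  unfold tvF Fnat
  congr 1
  · rw [← Fin.sum_univ_eq_sum_range (fun j => extF n τ j * (extF n y j - extF n u j) ^ 2) (n+1)]
    apply Finset.sum_congr rfl
    intro i _
    rw [extF_app, extF_app, extF_app]
  · congr 1
    rw [← Fin.sum_univ_eq_sum_range (fun k => |extF n u (k+1) - extF n u k|) n]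
    apply Finset.sum_congr rfl
    intro i _
    have h1 : extF n u (↑i + 1) = u i.succ := by
      rw [extF_coe n u _ (by omega : (i : ℕ) + 1 < n + 1)]
      congr 1
    have h2 : extF n u ↑i = u i.castSucc := by
      rw [extF_coe n u _ (by omega : (i : ℕ) < n + 1)]
      congr 1
    rw [h1, h2]

lemma Fnat_congr (n : ℕ) (y τ : ℕ → ℝ) (c : ℝ) (u u' : ℕ → ℝ)
    (h : ∀ j, j < n+1 → u j = u' j) : Fnat n y τ c u = Fnat n y τ c u' := by
  unfold Fnat
  congr 1
  · apply Finset.sum_congr rfl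
    intro i hi
    rw [mem_range] at hi
    rw [h i hi]
  · congr 1
    apply Finset.sum_congr rfl
    intro k hk
    rw [mem_range] at hk
    rw [h k (by omega), h (k+1) (by omega)]

lemma Fnat_min_transfer (n : ℕ) (y τ : Fin (n+1) → ℝ) (c : ℝ) (u : Fin (n+1) → ℝ)
    (hu : ∀ v, tvF n y τ c u ≤ tvF n y τ c v) :
    ∀ v : ℕ → ℝ, Fnat n (extF n y) (extF n τ) c (extF n u)
      ≤ Fnat n (extF n y) (extF n τ) c v := by
  intro v
  have h1 : Fnat n (extF n y) (extF n τ) c v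
      = Fnat n (extF n y) (extF n τ) c (extF n (fun i : Fin (n+1) => v ↑i)) := by
    apply Fnat_congr
    intro j hj
    rw [extF_coe n _ j hj]
  rw [h1, ← tvF_eq_Fnat, ← tvF_eq_Fnat]
  exact hu _

open Classical in
/-- The number of segments (maximal constant runs) of `u`: one more than the
number of jumps between adjacent indices. -/
noncomputable def numSegments (n : ℕ) (u : Fin (n + 1) → ℝ) : ℕ :=
  (Finset.univ.filter (fun i : Fin n => u i.succ ≠ u i.castSucc)).card + 1

/-- The number of segments `K(λ)` of the minimizer is a nonincreasing function of
`λ` on `[0, ∞)`. -/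
theorem tv_numSegments_antitone (n : ℕ) (y τ : Fin (n + 1) → ℝ)
    (hτ : ∀ i, 0 < τ i)
    (lam lam' : ℝ) (hlam : 0 ≤ lam) (hle : lam ≤ lam')
    (u u' : Fin (n + 1) → ℝ)
    (hu : ∀ v : Fin (n + 1) → ℝ, tvF n y τ lam u ≤ tvF n y τ lam v)
    (hu' : ∀ v : Fin (n + 1) → ℝ, tvF n y τ lam' u' ≤ tvF n y τ lam' v) :
    numSegments n u' ≤ numSegments n u := by
  classical
  have hlam' : 0 ≤ lam' := le_trans hlam hle
  set μ : ℝ := lam' - lam with hμdef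
  have hμ : 0 ≤ μ := by simp only [hμdef]; linarith
  obtain ⟨vf, hvf⟩ := tvF_exists_min n u τ hτ μ hμ
  have hτe : ∀ i, i < n+1 → 0 < extF n τ i := by
    intro i hi
    rw [extF_coe n τ i hi]
    exact hτ _
  have hτe0 : ∀ i, 0 ≤ extF n τ i := by
    intro i
    unfold extF
    split
    · exact (hτ _).le
    · exact le_refl 0
  have hmin_u : ∀ w, Fnat n (extF n y) (extF n τ) lam (extF n u)
      ≤ Fnat n (extF n y) (extF n τ) lam w := Fnat_min_transfer n y τ lam u hu
  have hmin_v : ∀ w, Fnat n (extF n u) (extF n τ) μ (extF n vf)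
      ≤ Fnat n (extF n u) (extF n τ) μ w := Fnat_min_transfer n u τ μ vf hvf
  obtain ⟨hZtot, hZ⟩ := kkt_of_min n (extF n y) (extF n τ) (extF n u) lam hτe hlam hmin_u
  obtain ⟨hWtot, hW⟩ := kkt_of_min n (extF n u) (extF n τ) (extF n vf) μ hτe hμ hmin_v
  have hsplit : ∀ m : ℕ, ∑ j ∈ Finset.range m, 2 * extF n τ j * (extF n vf j - extF n y j)
      = (∑ j ∈ Finset.range m, 2 * extF n τ j * (extF n u j - extF n y j))
        + (∑ j ∈ Finset.range m, 2 * extF n τ j * (extF n vf j - extF n u j)) := by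
    intro m
    rw [← Finset.sum_add_distrib]
    exact Finset.sum_congr rfl fun j _ => by ring
  have hsand := fun (k : ℕ) (hkn : k < n) =>
    sandwich n (extF n u) (extF n τ) (extF n vf) μ hτe hμ hWtot
      (fun m hm => (hW m hm).1) k hkn
  have hjumps : ∀ k, k < n → (extF n vf k < extF n vf (k+1) →
        extF n u k ≤ extF n vf k ∧ extF n vf (k+1) ≤ extF n u (k+1)) ∧
      (extF n vf (k+1) < extF n vf k →
        extF n vf k ≤ extF n u k ∧ extF n u (k+1) ≤ extF n vf (k+1)) := by
    intro k hkn
    obtain ⟨hWb, hWup, hWdn⟩ := hW k hkn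
    exact ⟨fun h => (hsand k hkn).1 (hWup h), fun h => (hsand k hkn).2 (hWdn h)⟩
  have htot' : ∑ j ∈ Finset.range (n+1), 2 * extF n τ j * (extF n vf j - extF n y j) = 0 := by
    rw [hsplit, hZtot, hWtot]
    ring
  have hcert : ∀ k, k < n →
      |∑ j ∈ Finset.range (k+1), 2 * extF n τ j * (extF n vf j - extF n y j)| ≤ lam' ∧
      (extF n vf k < extF n vf (k+1) →
        ∑ j ∈ Finset.range (k+1), 2 * extF n τ j * (extF n vf j - extF n y j) = lam') ∧
      (extF n vf (k+1) < extF n vf k →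
        ∑ j ∈ Finset.range (k+1), 2 * extF n τ j * (extF n vf j - extF n y j) = -lam') := by
    intro k hkn
    obtain ⟨hZb, hZup, hZdn⟩ := hZ k hkn
    obtain ⟨hWb, hWup, hWdn⟩ := hW k hkn
    refine ⟨?_, ?_, ?_⟩
    · rw [hsplit]
      calc |(∑ j ∈ Finset.range (k+1), 2 * extF n τ j * (extF n u j - extF n y j))
            + ∑ j ∈ Finset.range (k+1), 2 * extF n τ j * (extF n vf j - extF n u j)|
          ≤ |∑ j ∈ Finset.range (k+1), 2 * extF n τ j * (extF n u j - extF n y j)|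
            + |∑ j ∈ Finset.range (k+1), 2 * extF n τ j * (extF n vf j - extF n u j)| :=
            abs_add_le _ _
        _ ≤ lam + μ := add_le_add hZb hWb
        _ = lam' := by simp only [hμdef]; ring
    · intro hj
      have h1 := (hjumps k hkn).1 hj
      have hujump : extF n u k < extF n u (k+1) := by
        have h2 := h1.1
        have h3 := h1.2
        linarith
      rw [hsplit, hZup hujump, hWup hj, hμdef]
      ring
    · intro hj
      have h1 := (hjumps k hkn).2 hj
      have hujump : extF n u (k+1) < extF n u k := by
        have h2 := h1.1
        have h3 := h1.2
        linarith
      rw [hsplit, hZdn hujump, hWdn hj, hμdef]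
      ring
  have hvf_min : ∀ w : Fin (n+1) → ℝ, tvF n y τ lam' vf ≤ tvF n y τ lam' w := by
    intro w
    rw [tvF_eq_Fnat, tvF_eq_Fnat]
    exact min_of_kkt n (extF n y) (extF n τ) lam' (extF n vf) hτe0 htot' hcert (extF n w)
  have hv_eq : vf = u' := tvF_min_unique n y τ hτ lam' hlam' vf u' hvf_min hu'
  have hjump_subset : ∀ i : Fin n, u' i.succ ≠ u' i.castSucc → u i.succ ≠ u i.castSucc := by
    intro i hne
    have hkn : (i : ℕ) < n := i.isLt
    have ev1 : extF n vf ((i : ℕ)+1) = u' i.succ := by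
      rw [extF_coe n vf _ (by omega : (i : ℕ) + 1 < n + 1), hv_eq]
      congr 1
    have ev0 : extF n vf (i : ℕ) = u' i.castSucc := by
      rw [extF_coe n vf _ (by omega : (i : ℕ) < n + 1), hv_eq]
      congr 1
    have eu1 : extF n u ((i : ℕ)+1) = u i.succ := by
      rw [extF_coe n u _ (by omega : (i : ℕ) + 1 < n + 1)]
      congr 1
    have eu0 : extF n u (i : ℕ) = u i.castSucc := by
      rw [extF_coe n u _ (by omega : (i : ℕ) < n + 1)]
      congr 1
    rcases lt_trichotomy (extF n vf (i : ℕ)) (extF n vf ((i : ℕ)+1)) with hlt | heq | hgt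
    · have h1 := (hjumps (i : ℕ) hkn).1 hlt
      have h2 : u i.castSucc < u i.succ := by
        rw [← eu1, ← eu0]
        linarith [h1.1, h1.2]
      exact ne_of_gt h2
    · exact absurd (by rw [← ev1, ← ev0, heq]) hne
    · have h1 := (hjumps (i : ℕ) hkn).2 hgt
      have h2 : u i.succ < u i.castSucc := by
        rw [← eu1, ← eu0]
        linarith [h1.1, h1.2]
      exact ne_of_lt h2
  unfold numSegments
  apply Nat.add_le_add_right
  apply Finset.card_le_card
  intro i hi
  rw [Finset.mem_filter] at hi ⊢
  exact ⟨Finset.mem_univ i, hjump_subset i hi.2⟩
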